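/- Let q be an invertible element of a commutative ring and let t be an element of an associative algebra (with t nilpotent or in a power-series setting so that the inverses exist). Then the product of the inverses (1-t)^{-1}(1-qt)^{-1}\cdots(1-q^{N-1}t)^{-1} equals the sum over k \geq 0 of \binom{N+k-1}{k}_q t^k, where \binom{a}{b}_q denotes the Gaussian (q-)binomial coefficient. -/

import Mathlib

/-- The Gaussian (q-)binomial coefficient, defined by the q-Pascal recurrence
`C_q(n+1, k+1) = C_q(n, k) + q^(k+1) * C_q(n, k+1)`.  For `0 ≤ b ≤ a` it equals
`[a]_q! / ([b]_q! [a-b]_q!)` and it vanishes for `b > a`. -/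
def qChoose {R : Type*} [CommRing R] (q : R) : ℕ → ℕ → R
  | _, 0 => 1
  | 0, _ + 1 => 0
  | n + 1, k + 1 => qChoose q n k + q ^ (k + 1) * qChoose q n (k + 1)

lemma qChoose_eq_zero {R : Type*} [CommRing R] (q : R) :
    ∀ n k : ℕ, n < k → qChoose q n k = 0
  | 0, _ + 1, _ => rfl
  | n + 1, k + 1, h => by
    rw [qChoose, qChoose_eq_zero q n k (by omega), qChoose_eq_zero q n (k+1) (by omega)]
    ring

lemma map_ringInverse {A B : Type*} [CommRing A] [CommRing B] (f : A →+* B) {x : A}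
    (h : IsUnit x) : f (Ring.inverse x) = Ring.inverse (f x) := by
  obtain ⟨u, rfl⟩ := h
  rw [show f (u : A) = ((Units.map (f : A →* B) u : Bˣ) : B) from rfl, Ring.inverse_unit,
    Ring.inverse_unit, show f ((u⁻¹ : Aˣ) : A) = ((Units.map (f : A →* B) u⁻¹ : Bˣ) : B) from rfl,
    map_inv]

/-- in `R[[t]]` (with `t = X`), the product of the inverses
`(1-t)⁻¹ (1-q t)⁻¹ ⋯ (1-q^(N-1) t)⁻¹` equals `∑_{k ≥ 0} C_q(N+k-1, k) t^k`. -/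
theorem statement0 {R : Type*} [CommRing R] (q : Rˣ) (N : ℕ) :
    (∏ j ∈ Finset.range N,
        Ring.inverse (1 - PowerSeries.C ((q : R) ^ j) * PowerSeries.X)) =
      PowerSeries.mk fun k => qChoose (q : R) (N + k - 1) k := by
  have hu : ∀ a : R, IsUnit (1 - PowerSeries.C a * PowerSeries.X) := by
    intro a
    rw [PowerSeries.isUnit_iff_constantCoeff]
    simp
  induction N with
  | zero =>
    rw [Finset.prod_range_zero]
    ext k
    cases k with
    | zero => simp [qChoose]
    | succ m =>
      simp [PowerSeries.coeff_one, qChoose_eq_zero (q : R) m (m + 1) (by omega)]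
  | succ N ih =>
    rw [Finset.prod_range_succ']
    have hres : (∏ j ∈ Finset.range N,
        Ring.inverse (1 - PowerSeries.C ((q : R) ^ (j + 1)) * PowerSeries.X)) =
        PowerSeries.mk fun k => (q : R) ^ k * qChoose (q : R) (N + k - 1) k := by
      have : ∀ j, (1 - PowerSeries.C ((q : R) ^ (j + 1)) * PowerSeries.X) =
          PowerSeries.rescale (q : R) (1 - PowerSeries.C ((q : R) ^ j) * PowerSeries.X) := by
        intro j
        have hC : PowerSeries.rescale (q : R) (PowerSeries.C ((q : R) ^ j)) =
            PowerSeries.C ((q : R) ^ j) := by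
          ext n
          simp only [PowerSeries.coeff_rescale, PowerSeries.coeff_C]
          split <;> simp_all
        rw [map_sub, map_one, map_mul, PowerSeries.rescale_X, hC, ← mul_assoc, ← map_mul,
          ← pow_succ]
      simp_rw [this, fun j => (map_ringInverse (PowerSeries.rescale (q : R))
        (hu ((q : R) ^ j))).symm, ← map_prod, ih]
      ext k
      simp [PowerSeries.coeff_rescale]
    rw [hres, pow_zero]
    have key : (1 - PowerSeries.C 1 * PowerSeries.X) *
        PowerSeries.mk (fun k => qChoose (q : R) (N + 1 + k - 1) k) =
        PowerSeries.mk fun k => (q : R) ^ k * qChoose (q : R) (N + k - 1) k := by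
      ext k
      rw [sub_mul, map_sub, one_mul, map_one, one_mul]
      cases k with
      | zero =>
        simp [qChoose]
      | succ m =>
        rw [PowerSeries.coeff_succ_X_mul]
        simp only [PowerSeries.coeff_mk]
        have h1 : N + 1 + (m + 1) - 1 = (N + m) + 1 := by omega
        have h2 : N + 1 + m - 1 = N + m := by omega
        have h3 : N + (m + 1) - 1 = N + m := by omega
        rw [h1, h2, h3, qChoose]
        ring
    calc PowerSeries.mk (fun k => (q : R) ^ k * qChoose (q : R) (N + k - 1) k) *
          Ring.inverse (1 - PowerSeries.C 1 * PowerSeries.X)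
        = (1 - PowerSeries.C 1 * PowerSeries.X) *
            PowerSeries.mk (fun k => qChoose (q : R) (N + 1 + k - 1) k) *
          Ring.inverse (1 - PowerSeries.C 1 * PowerSeries.X) := by rw [key]
      _ = _ := by
          rw [mul_comm (1 - PowerSeries.C 1 * PowerSeries.X), mul_assoc,
            Ring.mul_inverse_cancel _ (hu 1), mul_one]
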